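/- Let 1 ≤ k ≤ n. For every κ ∈ Γ_k and every i ∈ {1,…,n}, the partial derivative of the k-th elementary symmetric polynomial satisfies ∂H_k/∂κ_i(κ) > 0 (i.e., H_k is strictly monotone increasing in each variable on Γ_k). -/

import Mathlib

open Polynomial Nat


lemma esymm_cons (a : ℝ) (t : Multiset ℝ) (j : ℕ) :
    (a ::ₘ t).esymm (j+1) = t.esymm (j+1) + a * t.esymm j := by
  simp [Multiset.esymm, Multiset.powersetCard_cons, Multiset.map_add, Multiset.sum_add,
    Multiset.map_map, Function.comp, Multiset.prod_cons, Multiset.sum_map_mul_left]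

lemma coeff_prod_one_sub (t : Multiset ℝ) :
    ∀ i, ((t.map (fun a => 1 - C a * X)).prod).coeff i = (-1)^i * t.esymm i := by
  induction t using Multiset.induction_on with
  | empty =>
    intro i
    cases i with
    | zero => simp [Multiset.esymm]
    | succ n => simp [Multiset.esymm, coeff_one, Nat.succ_ne_zero, Multiset.powersetCard_zero_right]
  | cons a t ih =>
    intro i
    rw [Multiset.map_cons, Multiset.prod_cons]
    have expand : (1 - C a * X) * (t.map (fun a => 1 - C a * X)).prod
        = (t.map (fun a => 1 - C a * X)).prod - C a * (X * (t.map (fun a => 1 - C a * X)).prod) := by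
      ring
    rw [expand]
    cases i with
    | zero => simp [ih 0, Multiset.esymm]
    | succ n =>
      rw [coeff_sub, coeff_C_mul, coeff_X_mul, ih, ih, esymm_cons]
      ring

lemma natDegree_prod_one_sub_le (t : Multiset ℝ) :
    ((t.map (fun a => 1 - C a * X)).prod).natDegree ≤ Multiset.card t := by
  induction t using Multiset.induction_on with
  | empty => simp
  | cons a t ih =>
    rw [Multiset.map_cons, Multiset.prod_cons, Multiset.card_cons]
    refine le_trans (natDegree_mul_le) ?_
    have h1 : (1 - C a * X).natDegree ≤ 1 := by
      refine le_trans (natDegree_sub_le _ _) ?_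
      simp only [natDegree_one, sup_le_iff]
      exact ⟨Nat.zero_le _, le_trans (natDegree_C_mul_le a X) (by simp)⟩
    omega

lemma esymm_big {t : Multiset ℝ} {j : ℕ} (h : Multiset.card t < j) : t.esymm j = 0 := by
  simp [Multiset.esymm, Multiset.powersetCard_eq_empty _ h]

lemma splits_derivative {p : ℝ[X]} (hp : p.Splits) :
    (derivative p).Splits := by
  by_cases h0 : p.natDegree = 0
  · rw [Polynomial.eq_C_of_natDegree_eq_zero h0, derivative_C]
    exact Splits.zero
  · have hp0 : p ≠ 0 := fun h => h0 (by simp [h])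
    have hkey : (derivative p).coeff (p.natDegree - 1) ≠ 0 := by
      rw [coeff_derivative]
      have h1 : p.natDegree - 1 + 1 = p.natDegree := by omega
      rw [h1]
      refine mul_ne_zero ?_ ?_
      · rwa [coeff_natDegree, Ne, leadingCoeff_eq_zero]
      · have : ((p.natDegree - 1 : ℕ) : ℝ) + 1 ≠ 0 := by positivity
        exact_mod_cast this
    have hd0 : derivative p ≠ 0 := fun h => hkey (by simp [h])
    rw [splits_iff_card_roots] at hp ⊢
    have hub : (derivative p).natDegree ≤ p.natDegree - 1 :=
      Nat.le_sub_one_of_lt (natDegree_derivative_lt h0)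
    have h1 := p.card_roots_le_derivative
    have h2 := (derivative p).card_roots'
    omega

lemma splits_iterate_derivative {p : ℝ[X]} (N : ℕ) (hp : p.Splits) :
    (derivative^[N] p).Splits := by
  induction N with
  | zero => simpa
  | succ n ih => rw [Function.iterate_succ_apply']; exact splits_derivative ih

lemma quad_disc {q : ℝ[X]} (hs : q.Splits) (hd : q.natDegree ≤ 2) :
    4 * (q.coeff 2 * q.coeff 0) ≤ (q.coeff 1)^2 := by
  by_cases h2 : q.coeff 2 = 0
  · rw [h2]; nlinarith [sq_nonneg (q.coeff 1)]
  · have hdeg : q.natDegree = 2 := le_antisymm hd (le_natDegree_of_ne_zero h2)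
    have hcard : Multiset.card q.roots = q.natDegree := splits_iff_card_roots.1 hs
    obtain ⟨x, y, hxy⟩ := Multiset.card_eq_two.1 (by rw [hcard, hdeg] :
      Multiset.card q.roots = 2)
    have e1 : q.roots.esymm 1 = x + y := by
      rw [hxy]; simp [Multiset.esymm, Multiset.powersetCard_one]; ring
    have e2 : q.roots.esymm 2 = x * y := by
      rw [hxy]; simp [Multiset.esymm, Multiset.powersetCard_cons, Multiset.powersetCard_one]
    have c1 : q.coeff 1 = q.leadingCoeff * (-1) ^ (q.natDegree - 1) * q.roots.esymm (q.natDegree - 1) :=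
      Polynomial.coeff_eq_esymm_roots_of_card hcard (by omega)
    have c0 : q.coeff 0 = q.leadingCoeff * (-1) ^ (q.natDegree - 0) * q.roots.esymm (q.natDegree - 0) :=
      Polynomial.coeff_eq_esymm_roots_of_card hcard (by omega)
    have cl : q.coeff 2 = q.leadingCoeff := by rw [← hdeg, coeff_natDegree]
    rw [hdeg] at c1 c0
    norm_num at c1 c0
    rw [e1] at c1
    rw [e2] at c0
    rw [c1, c0, cl]
    nlinarith [sq_nonneg (q.leadingCoeff * (x - y))]


lemma desc_succ_self (c : ℕ) : (c+1).descFactorial c = (c+1)! := by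
  have h := Nat.descFactorial_self (c+1)
  rw [Nat.descFactorial_succ] at h
  simpa using h

lemma desc_succ_two (c : ℕ) : 2 * ((c+2).descFactorial c) = (c+2)! := by
  have h := Nat.descFactorial_self (c+2)
  rw [Nat.descFactorial_succ, Nat.descFactorial_succ] at h
  have h1 : c + 2 - (c+1) = 1 := by omega
  have h2 : c + 2 - c = 2 := by omega
  rw [h1, h2] at h
  omega

lemma nat_const_ineq (d c : ℕ) :
    ((d+1).descFactorial d)^2 * ((c+1).descFactorial c)^2
      ≤ 4 * ((d+2).descFactorial d) * (d.descFactorial d) * ((c+2).descFactorial c)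
        * (c.descFactorial c) := by
  rw [desc_succ_self, desc_succ_self, Nat.descFactorial_self, Nat.descFactorial_self]
  have h4 : 4 * ((d+2).descFactorial d) * d ! * ((c+2).descFactorial c) * c !
      = (2 * ((d+2).descFactorial d)) * (2 * ((c+2).descFactorial c)) * (d ! * c !) := by ring
  rw [h4, desc_succ_two, desc_succ_two]
  have hd : (d+2)! = (d+2) * ((d+1) * d !) := by
    rw [Nat.factorial_succ, Nat.factorial_succ]
  have hc : (c+2)! = (c+2) * ((c+1) * c !) := by
    rw [Nat.factorial_succ, Nat.factorial_succ]
  have hd1 : (d+1)! = (d+1) * d ! := Nat.factorial_succ d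
  have hc1 : (c+1)! = (c+1) * c ! := Nat.factorial_succ c
  rw [hd, hc, hd1, hc1]
  have e1 : ((d+1) * d !)^2 * ((c+1) * c !)^2
      = ((d+1)*(c+1)) * ((d+1)*(c+1)*(d !)^2*(c !)^2) := by ring
  have e2 : (d+2) * ((d+1) * d !) * ((c+2) * ((c+1) * c !)) * (d ! * c !)
      = ((d+2)*(c+2)) * ((d+1)*(c+1)*(d !)^2*(c !)^2) := by ring
  rw [e1, e2]
  exact Nat.mul_le_mul (Nat.mul_le_mul (by omega) (by omega)) le_rfl


lemma descFactorial_pos' {k n : ℕ} (h : k ≤ n) : 0 < n.descFactorial k :=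
  Nat.pos_of_ne_zero (fun h0 => absurd (Nat.descFactorial_eq_zero_iff_lt.1 h0) (by omega))

lemma splits_multiset_prod' (t : Multiset ℝ[X]) (h : ∀ p ∈ t, p.Splits) :
    t.prod.Splits := by
  induction t using Multiset.induction_on with
  | empty => simpa using Splits.one
  | cons a t ih =>
    rw [Multiset.prod_cons]
    exact Splits.mul (h a (Multiset.mem_cons_self a t))
      (ih fun p hp => h p (Multiset.mem_cons_of_mem hp))

lemma newton_ineq (s : Multiset ℝ) (j : ℕ) (hj : 1 ≤ j) :
    s.esymm (j-1) * s.esymm (j+1) ≤ (s.esymm j)^2 := by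
  rcases lt_or_ge (Multiset.card s) (j+1) with hbig | hjm
  · rw [esymm_big hbig, mul_zero]
    exact sq_nonneg _
  obtain ⟨d, rfl⟩ : ∃ d, j = d + 1 := ⟨j - 1, by omega⟩
  obtain ⟨c, hc⟩ : ∃ c, Multiset.card s = (d+1) + 1 + c := ⟨_, (by omega :
    Multiset.card s = (d+1) + 1 + (Multiset.card s - ((d+1)+1)))⟩
  have hd1 : d + 1 - 1 = d := by omega
  rw [hd1]
  set m := Multiset.card s with hm
  -- the polynomial f
  set f := (s.map (fun r => X + C r)).prod with hfdef
  have hfmonic : f.Monic := by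
    exact monic_multiset_prod_of_monic _ _ (fun r _ => monic_X_add_C r)
  have hfdeg : f.natDegree = m := by
    rw [hfdef, natDegree_multiset_prod_of_monic]
    · simp [Multiset.map_map, Function.comp, natDegree_X_add_C, hm]
    · intro p hp
      obtain ⟨r, _, rfl⟩ := Multiset.mem_map.1 hp
      exact monic_X_add_C r
  have hfsplits : f.Splits := by
    apply splits_multiset_prod'
    intro p hp
    obtain ⟨r, _, rfl⟩ := Multiset.mem_map.1 hp
    exact Splits.of_natDegree_le_one (by rw [natDegree_X_add_C])
  have hfcoeff : ∀ d' : ℕ, d' ≤ m → f.coeff d' = s.esymm (m - d') :=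
    fun d' hd' => Multiset.prod_X_add_C_coeff s hd'
  -- g = derivative^[c] f
  set g := derivative^[c] f with hgdef
  have hgcoeff : ∀ i : ℕ, g.coeff i = ((i+c).descFactorial c : ℝ) * f.coeff (i+c) := by
    intro i
    rw [hgdef, coeff_iterate_derivative, nsmul_eq_mul]
  have hgtop : g.coeff (d+2) = (m.descFactorial c : ℝ) := by
    rw [hgcoeff]
    have h1 : d + 2 + c = m := by omega
    rw [h1, hfcoeff m le_rfl]
    simp [Multiset.esymm]
  have hgzero : ∀ i : ℕ, d + 2 < i → g.coeff i = 0 := by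
    intro i hi
    rw [hgcoeff, coeff_eq_zero_of_natDegree_lt (by omega : f.natDegree < i + c), mul_zero]
  have hgtopne : g.coeff (d+2) ≠ 0 := by
    rw [hgtop]
    exact_mod_cast (descFactorial_pos' (by omega : c ≤ m)).ne'
  have hgdeg : g.natDegree = d + 2 :=
    le_antisymm (natDegree_le_iff_coeff_eq_zero.2 hgzero) (le_natDegree_of_ne_zero hgtopne)
  have hgsplits : g.Splits := splits_iterate_derivative c hfsplits
  have hgroots : Multiset.card g.roots = d + 2 := by
    rw [splits_iff_card_roots.1 hgsplits, hgdeg]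
  have hL : g.leadingCoeff = (m.descFactorial c : ℝ) := by
    rw [leadingCoeff, hgdeg, hgtop]
  have hLpos : (0:ℝ) < g.leadingCoeff := by
    rw [hL]
    exact_mod_cast descFactorial_pos' (by omega : c ≤ m)
  -- Vieta for g
  have hVieta : ∀ d' : ℕ, d' ≤ d + 2 →
      g.leadingCoeff * (-1)^d' * g.roots.esymm d'
        = (((m - d').descFactorial c : ℕ) : ℝ) * s.esymm d' := by
    intro d' hd'
    have h1 := Polynomial.coeff_eq_esymm_roots_of_card
      (splits_iff_card_roots.1 hgsplits) (k := d + 2 - d') (by omega)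
    rw [hgdeg] at h1
    have e : d + 2 - (d + 2 - d') = d' := by omega
    rw [e] at h1
    rw [hgcoeff] at h1
    have e2 : d + 2 - d' + c = m - d' := by omega
    rw [e2] at h1
    rw [hfcoeff (m - d') (by omega)] at h1
    have e3 : m - (m - d') = d' := by omega
    rw [e3] at h1
    linarith [h1]
  -- h = prod (1 - a X) over roots of g
  set p := (g.roots.map (fun a => 1 - C a * X)).prod with hpdef
  have hpcoeff : ∀ i, p.coeff i = (-1)^i * g.roots.esymm i := coeff_prod_one_sub g.roots
  have hpdeg : p.natDegree ≤ d + 2 := by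
    have := natDegree_prod_one_sub_le g.roots
    rwa [hgroots] at this
  have hpsplits : p.Splits := by
    apply splits_multiset_prod'
    intro q hq
    obtain ⟨r, _, rfl⟩ := Multiset.mem_map.1 hq
    refine Splits.of_natDegree_le_one ?_
    refine le_trans (natDegree_sub_le _ _) ?_
    simp only [natDegree_one, sup_le_iff]
    exact ⟨Nat.zero_le _, le_trans (natDegree_C_mul_le r X) (by simp)⟩
  -- q = derivative^[d] p
  set q := derivative^[d] p with hqdef
  have hqcoeff : ∀ i : ℕ, q.coeff i = ((i+d).descFactorial d : ℝ) * p.coeff (i+d) := by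
    intro i
    rw [hqdef, coeff_iterate_derivative, nsmul_eq_mul]
  have hqdeg : q.natDegree ≤ 2 := by
    refine natDegree_le_iff_coeff_eq_zero.2 (fun i hi => ?_)
    rw [hqcoeff, coeff_eq_zero_of_natDegree_lt (by omega : p.natDegree < i + d), mul_zero]
  have hqsplits : q.Splits := splits_iterate_derivative d hpsplits
  have quad := quad_disc hqsplits hqdeg
  -- key coefficient equations
  have keyeq : ∀ i : ℕ, i ≤ 2 →
      g.leadingCoeff * q.coeff i
        = (((i+d).descFactorial d : ℕ) : ℝ) * ((((m - (i+d)).descFactorial c : ℕ) : ℝ)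
          * s.esymm (i+d)) := by
    intro i hi
    have hV := hVieta (i+d) (by omega)
    rw [hqcoeff, hpcoeff]
    linear_combination (((i+d).descFactorial d : ℕ) : ℝ) * hV
  -- multiply quad by leadingCoeff^2
  have quad2 := mul_le_mul_of_nonneg_left quad (le_of_lt (by positivity :
    (0:ℝ) < g.leadingCoeff^2))
  have e2 := keyeq 2 le_rfl
  have e1 := keyeq 1 (by omega)
  have e0 := keyeq 0 (by omega)
  set L := g.leadingCoeff
  -- rewrite quad2 into esymm form
  have lhs_eq : L^2 * (4 * (q.coeff 2 * q.coeff 0)) = 4 * ((L * q.coeff 2) * (L * q.coeff 0)) := by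
    ring
  have rhs_eq : L^2 * (q.coeff 1)^2 = (L * q.coeff 1)^2 := by ring
  rw [lhs_eq, rhs_eq, e2, e1, e0] at quad2
  -- now pure arithmetic
  have harith := nat_const_ineq d c
  have hA2 : m - (2+d) = c := by omega
  have hA1 : m - (1+d) = c + 1 := by omega
  have hA0 : m - (0+d) = c + 2 := by omega
  rw [hA2, hA1, hA0] at quad2
  norm_num at quad2
  -- quad2 : 4 * (D2 * (c! * e_{d+2}) * (D0 * ((c+2)! * e_d))) ≤ (D1 * ((c+1)...* e_{d+1}))^2
  rw [show 2+d = d+2 from by omega, show 1+d = d+1 from by omega] at quad2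
  show s.esymm d * s.esymm (d+2) ≤ (s.esymm (d+1))^2
  rcases le_or_gt (s.esymm d * s.esymm (d+2)) 0 with hneg | hpos
  · exact le_trans hneg (sq_nonneg _)
  · have harithR : (((d+1).descFactorial d : ℝ))^2 * (((c+1).descFactorial c : ℝ))^2
        ≤ 4 * (((d+2).descFactorial d : ℝ)) * ((d.descFactorial d : ℝ))
          * (((c+2).descFactorial c : ℝ)) * ((c.descFactorial c : ℝ)) := by
      exact_mod_cast harith
    set Creal : ℝ := 4 * (((d+2).descFactorial d : ℝ)) * ((c.descFactorial c : ℝ))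
      * ((d.descFactorial d : ℝ)) * (((c+2).descFactorial c : ℝ)) with hCreal
    have hCpos : 0 < Creal := by
      have p1 := descFactorial_pos' (le_refl c)
      have p2 := descFactorial_pos' (by omega : d ≤ d + 2)
      have p3 := descFactorial_pos' (le_refl d)
      have p4 := descFactorial_pos' (by omega : c ≤ c + 2)
      rw [hCreal]
      have q1 : (0:ℝ) < ((d+2).descFactorial d : ℝ) := by exact_mod_cast p2
      have q2 : (0:ℝ) < ((c.descFactorial c : ℕ) : ℝ) := by exact_mod_cast p1
      have q3 : (0:ℝ) < ((d.descFactorial d : ℕ) : ℝ) := by exact_mod_cast p3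
      have q4 : (0:ℝ) < (((c+2).descFactorial c : ℕ) : ℝ) := by exact_mod_cast p4
      positivity
    have t1 : Creal * (s.esymm (d+2) * s.esymm d)
        ≤ ((((d+1).descFactorial d : ℝ)) * (((c+1).descFactorial c : ℝ)))^2
          * (s.esymm (d+1))^2 := by
      calc Creal * (s.esymm (d+2) * s.esymm d)
          = 4 * (((d+2).descFactorial d : ℝ) * ((c.descFactorial c : ℝ) * s.esymm (d+2))
            * ((d.descFactorial d : ℝ) * (((c+2).descFactorial c : ℝ) * s.esymm d))) := by
            rw [hCreal]; ring
        _ ≤ (((d+1).descFactorial d : ℝ) * (((c+1).descFactorial c : ℝ) * s.esymm (d+1)))^2 :=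
            quad2
        _ = ((((d+1).descFactorial d : ℝ)) * (((c+1).descFactorial c : ℝ)))^2
            * (s.esymm (d+1))^2 := by ring
    have t2 : ((((d+1).descFactorial d : ℝ)) * (((c+1).descFactorial c : ℝ)))^2
        * (s.esymm (d+1))^2 ≤ Creal * (s.esymm (d+1))^2 := by
      refine mul_le_mul_of_nonneg_right ?_ (sq_nonneg _)
      calc ((((d+1).descFactorial d : ℝ)) * (((c+1).descFactorial c : ℝ)))^2
          = (((d+1).descFactorial d : ℝ))^2 * (((c+1).descFactorial c : ℝ))^2 := by ring
        _ ≤ 4 * (((d+2).descFactorial d : ℝ)) * ((d.descFactorial d : ℝ))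
            * (((c+2).descFactorial c : ℝ)) * ((c.descFactorial c : ℝ)) := harithR
        _ = Creal := by rw [hCreal]; ring
    have t3 := le_of_mul_le_mul_left (t1.trans t2) hCpos
    calc s.esymm d * s.esymm (d+2) = s.esymm (d+2) * s.esymm d := by ring
      _ ≤ (s.esymm (d+1))^2 := t3



noncomputable section

/-- The `k`-th elementary symmetric polynomial `H_k` of `κ ∈ ℝⁿ`. -/
def esymm (n k : ℕ) (κ : Fin n → ℝ) : ℝ :=
  ∑ s ∈ Finset.powersetCard k (Finset.univ : Finset (Fin n)), ∏ i ∈ s, κ i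

/-- The positive cone `Γ₊ ⊆ ℝⁿ`. -/
def GammaPlus (n : ℕ) : Set (Fin n → ℝ) := {κ | ∀ i, 0 < κ i}

/-- The Garding cone `Γ_k = {κ : H_1(κ) > 0, …, H_k(κ) > 0}`. -/
def GammaK (n k : ℕ) : Set (Fin n → ℝ) :=
  {κ | ∀ j : ℕ, 1 ≤ j → j ≤ k → 0 < esymm n j κ}

-- finset esymm via multiset
lemma finset_sum_powersetCard_eq {n : ℕ} (κ : Fin n → ℝ) (A : Finset (Fin n)) (j : ℕ) :
    ∑ t ∈ A.powersetCard j, ∏ x ∈ t, κ x = (A.val.map κ).esymm j :=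
  (Finset.esymm_map_val κ A j).symm

lemma finset_esymm_erase {n : ℕ} (κ : Fin n → ℝ) (A : Finset (Fin n)) {i : Fin n}
    (hi : i ∈ A) (j : ℕ) :
    ∑ t ∈ A.powersetCard (j+1), ∏ x ∈ t, κ x
      = (∑ t ∈ (A.erase i).powersetCard (j+1), ∏ x ∈ t, κ x)
        + κ i * ∑ t ∈ (A.erase i).powersetCard j, ∏ x ∈ t, κ x := by
  rw [finset_sum_powersetCard_eq, finset_sum_powersetCard_eq, finset_sum_powersetCard_eq]
  have hval : A.val = i ::ₘ (A.erase i).val := by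
    rw [Finset.erase_val]
    exact (Multiset.cons_erase (by exact_mod_cast hi)).symm
  rw [hval, Multiset.map_cons, esymm_cons]



lemma esymm_erase_pos (n : ℕ) : ∀ k : ℕ, 1 ≤ k → k ≤ n → ∀ κ : Fin n → ℝ,
    (∀ j : ℕ, 1 ≤ j → j ≤ k →
      0 < ∑ t ∈ (Finset.univ : Finset (Fin n)).powersetCard j, ∏ x ∈ t, κ x) →
    ∀ i : Fin n,
      0 < ∑ t ∈ ((Finset.univ : Finset (Fin n)).erase i).powersetCard (k-1), ∏ x ∈ t, κ x := by
  intro k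
  induction k with
  | zero => omega
  | succ k ih =>
    intro hk1 hkn κ hpos i
    rcases Nat.eq_zero_or_pos k with rfl | hk
    · simp
    obtain ⟨d, rfl⟩ : ∃ d, k = d + 1 := ⟨k - 1, by omega⟩
    -- goal : 0 < e' (d+1)
    show 0 < ∑ t ∈ ((Finset.univ : Finset (Fin n)).erase i).powersetCard (d+2-1), ∏ x ∈ t, κ x
    have hmem : i ∈ (Finset.univ : Finset (Fin n)) := Finset.mem_univ i
    set B := (Finset.univ : Finset (Fin n)).erase i with hB
    set e' : ℕ → ℝ := fun j => ∑ t ∈ B.powersetCard j, ∏ x ∈ t, κ x with he'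
    show 0 < e' (d+2-1)
    have ha : 0 < e' d := by
      have := ih (by omega) (by omega) κ (fun j h1 h2 => hpos j h1 (by omega)) i
      simpa using this
    have hE1 : 0 < e' (d+1) + κ i * e' d := by
      have := hpos (d+1) (by omega) (by omega)
      rwa [finset_esymm_erase κ Finset.univ hmem d] at this
    have hE2 : 0 < e' (d+2) + κ i * e' (d+1) := by
      have := hpos (d+2) (by omega) (by omega)
      rwa [finset_esymm_erase κ Finset.univ hmem (d+1)] at this
    have hN : e' d * e' (d+2) ≤ (e' (d+1))^2 := by
      have h := newton_ineq (B.val.map κ) (d+1) (by omega)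
      simp only [Nat.add_sub_cancel] at h
      rw [he']
      simp only [finset_sum_powersetCard_eq]
      convert h using 3
    by_contra hle
    push_neg at hle
    have hb : e' (d+1) ≤ 0 := by simpa using hle
    nlinarith [mul_nonneg (by linarith : (0:ℝ) ≤ -(e' (d+1))) (le_of_lt hE1),
      mul_pos ha hE2, hN]


lemma esymm_hasFDerivAt (n k : ℕ) (κ : Fin n → ℝ) :
    HasFDerivAt (esymm n k)
      (∑ s ∈ Finset.powersetCard k (Finset.univ : Finset (Fin n)),
        ∑ j ∈ s, (∏ l ∈ s.erase j, κ l) •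
          (ContinuousLinearMap.proj j : (Fin n → ℝ) →L[ℝ] ℝ)) κ := by
  apply HasFDerivAt.fun_sum
  intro s _
  exact HasFDerivAt.finset_prod (fun j _ => hasFDerivAt_apply j κ)

lemma fderiv_esymm (n k : ℕ) (κ : Fin n → ℝ) (i : Fin n) (hk : 1 ≤ k) :
    fderiv ℝ (esymm n k) κ (Pi.single i 1)
      = ∑ t ∈ ((Finset.univ : Finset (Fin n)).erase i).powersetCard (k-1), ∏ x ∈ t, κ x := by
  rw [(esymm_hasFDerivAt n k κ).fderiv]
  rw [ContinuousLinearMap.sum_apply]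
  have step1 : ∀ s ∈ Finset.powersetCard k (Finset.univ : Finset (Fin n)),
      (∑ j ∈ s, (∏ l ∈ s.erase j, κ l) •
        (ContinuousLinearMap.proj j : (Fin n → ℝ) →L[ℝ] ℝ)) (Pi.single i 1)
      = if i ∈ s then ∏ l ∈ s.erase i, κ l else 0 := by
    intro s _
    rw [ContinuousLinearMap.sum_apply]
    have : ∀ j ∈ s, ((∏ l ∈ s.erase j, κ l) •
        (ContinuousLinearMap.proj j : (Fin n → ℝ) →L[ℝ] ℝ)) (Pi.single i 1)
        = if j = i then ∏ l ∈ s.erase j, κ l else 0 := by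
      intro j _
      rw [ContinuousLinearMap.smul_apply, ContinuousLinearMap.proj_apply, Pi.single_apply]
      simp [mul_ite]
    rw [Finset.sum_congr rfl this, Finset.sum_ite_eq' s i (fun j => ∏ l ∈ s.erase j, κ l)]
  rw [Finset.sum_congr rfl step1, Finset.sum_ite, Finset.sum_const_zero, add_zero]
  refine Finset.sum_nbij' (fun s => s.erase i) (fun t => insert i t) ?_ ?_ ?_ ?_ ?_
  · intro s hs
    rw [Finset.mem_filter, Finset.mem_powersetCard] at hs
    rw [Finset.mem_powersetCard]
    exact ⟨fun x hx => Finset.mem_erase.2 ⟨(Finset.mem_erase.1 hx).1, Finset.mem_univ x⟩,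
      by rw [Finset.card_erase_of_mem hs.2, hs.1.2]⟩
  · intro t ht
    rw [Finset.mem_powersetCard] at ht
    have hit : i ∉ t := fun h => (Finset.mem_erase.1 (ht.1 h)).1 rfl
    rw [Finset.mem_filter, Finset.mem_powersetCard]
    exact ⟨⟨Finset.subset_univ _, by rw [Finset.card_insert_of_notMem hit, ht.2]; omega⟩,
      Finset.mem_insert_self i t⟩
  · intro s hs
    rw [Finset.mem_filter] at hs
    exact Finset.insert_erase hs.2
  · intro t ht
    rw [Finset.mem_powersetCard] at ht
    exact Finset.erase_insert (fun h => (Finset.mem_erase.1 (ht.1 h)).1 rfl)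
  · intro s _
    rfl


/-- `H_k` is strictly monotone increasing in each variable on `Γ_k`. -/
theorem esymm_strictly_monotone_on_GammaK (n k : ℕ) (hk1 : 1 ≤ k) (hkn : k ≤ n)
    (κ : Fin n → ℝ) (hκ : κ ∈ GammaK n k) (i : Fin n) :
    0 < fderiv ℝ (esymm n k) κ (Pi.single i 1) := by
  rw [fderiv_esymm n k κ i hk1]
  exact esymm_erase_pos n k hk1 hkn κ (fun j h1 h2 => hκ j h1 h2) i
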